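/- arXiv:2508.08449 — 2 statements merged into one kernel-verified Lean document; each statement's English description precedes it below -/
import Mathlib

section
/- Let K be a compact subset of ℝ (viewed as a subset of ℂ), n ∈ ℕ, and w : K → [0,∞) a bounded upper semicontinuous function nonzero at at least n+1 points of K. Then the (unique) weighted Chebyshev polynomial of degree n on K with respect to w has real coefficients. -/
open Polynomial Metric Set
open Topology Filter

lemma my_usc_closed {f : ℂ → ℝ} {s : Set ℂ} (hf : UpperSemicontinuousOn f s)
    (hs : IsClosed s) (c : ℝ) : IsClosed {x | x ∈ s ∧ c ≤ f x} := by
  refine isClosed_of_closure_subset ?_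
  intro x hx
  have hxs : x ∈ s := hs.closure_subset (closure_mono (fun y hy => hy.1) hx)
  refine ⟨hxs, ?_⟩
  by_contra hc
  push_neg at hc
  have h1 : ∀ᶠ y in 𝓝[{x | x ∈ s ∧ c ≤ f x}] x, f y < c :=
    (hf x hxs c hc).filter_mono (nhdsWithin_mono x (fun y hy => hy.1))
  have hne : (𝓝[{x | x ∈ s ∧ c ≤ f x}] x).NeBot := mem_closure_iff_nhdsWithin_neBot.1 hx
  have h2 : ∀ᶠ y in 𝓝[{x | x ∈ s ∧ c ≤ f x}] x, y ∈ {x | x ∈ s ∧ c ≤ f x} :=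
    self_mem_nhdsWithin
  obtain ⟨y, hy1, hy2⟩ := (h1.and h2).exists
  exact absurd hy2.2 (not_le.2 hy1)

lemma my_usc_max {f : ℂ → ℝ} {s : Set ℂ} (hf : UpperSemicontinuousOn f s)
    (hs : IsCompact s) (hne : s.Nonempty) (hb : BddAbove (f '' s)) :
    ∃ x ∈ s, ∀ y ∈ s, f y ≤ f x := by
  set t := sSup (f '' s) with ht
  set C : ℕ → Set ℂ := fun k => {x | x ∈ s ∧ t - 1/(k+1) ≤ f x} with hC
  have hCclosed : ∀ k, IsClosed (C k) := fun k => my_usc_closed hf hs.isClosed _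
  have hCne : ∀ k, (C k).Nonempty := by
    intro k
    have h1 : t - 1/(k+1) < t := by
      have : (0:ℝ) < 1/(k+1) := by positivity
      linarith
    obtain ⟨y, hy, hyt⟩ := exists_lt_of_lt_csSup (hne.image f) h1
    obtain ⟨x, hx, rfl⟩ := hy
    exact ⟨x, hx, le_of_lt hyt⟩
  have hCsub : ∀ k, C (k+1) ⊆ C k := by
    intro k x hx
    refine ⟨hx.1, le_trans ?_ hx.2⟩
    have h2 : (1:ℝ)/(k+1+1) ≤ 1/(k+1) := by
      apply one_div_le_one_div_of_le
      · positivity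
      · push_cast; linarith
    push_cast
    push_cast at h2
    linarith
  have hinter : (⋂ k, C k).Nonempty := by
    refine IsCompact.nonempty_iInter_of_sequence_nonempty_isCompact_isClosed C hCsub hCne
      (hs.of_isClosed_subset (hCclosed 0) (fun x hx => hx.1)) hCclosed
  obtain ⟨x, hx⟩ := hinter
  have hxs : x ∈ s := (Set.mem_iInter.1 hx 0).1
  refine ⟨x, hxs, fun y hy => ?_⟩
  have hyt : f y ≤ t := le_csSup hb ⟨y, hy, rfl⟩
  have htx : t ≤ f x := by
    by_contra hcon
    push_neg at hcon
    obtain ⟨k, hk⟩ := exists_nat_one_div_lt (sub_pos.2 hcon)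
    have := (Set.mem_iInter.1 hx k).2
    push_cast at this hk
    linarith
  linarith

lemma my_usc_mul {w : ℂ → ℝ} {s : Set ℂ} (hw : UpperSemicontinuousOn w s)
    (hw0 : ∀ z ∈ s, 0 ≤ w z) {h : ℂ → ℝ} (hh : Continuous h) (hh0 : ∀ z, 0 ≤ h z) :
    UpperSemicontinuousOn (fun z => w z * h z) s := by
  intro x hx y hy
  have hy0 : 0 ≤ w x * h x := mul_nonneg (hw0 x hx) (hh0 x)
  -- find ε > 0 with (w x + ε) * (h x + ε) < y
  have hF : Filter.Tendsto (fun ε : ℝ => (w x + ε) * (h x + ε)) (𝓝 0) (𝓝 ((w x + 0) * (h x + 0))) := by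
    apply Filter.Tendsto.mul <;> exact (tendsto_const_nhds.add tendsto_id)
  have hF' : ∀ᶠ ε in 𝓝 (0:ℝ), (w x + ε) * (h x + ε) < y := by
    apply hF.eventually_lt_const
    simpa using hy
  obtain ⟨ε, hεy, hε0⟩ := (hF'.filter_mono nhdsWithin_le_nhds).and
    (self_mem_nhdsWithin (s := Set.Ioi (0:ℝ)) (a := 0)) |>.exists
  have h1 : ∀ᶠ z in 𝓝[s] x, w z < w x + ε := hw x hx (w x + ε) (lt_add_of_pos_right _ hε0)
  have h2 : ∀ᶠ z in 𝓝[s] x, h z < h x + ε := by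
    have := hh.continuousAt (x := x) |>.eventually_lt_const (lt_add_of_pos_right (h x) hε0)
    exact this.filter_mono nhdsWithin_le_nhds
  have h3 : ∀ᶠ z in 𝓝[s] x, z ∈ s := self_mem_nhdsWithin
  filter_upwards [h1, h2, h3] with z hz1 hz2 hz3
  calc w z * h z < (w x + ε) * (h x + ε) :=
        mul_lt_mul'' hz1 hz2 (hw0 z hz3) (hh0 z)
    _ < y := hεy

lemma my_bdd {K : Set ℂ} (hK : IsCompact K) {w : ℂ → ℝ} (hwb : BddAbove (w '' K))
    (hw0 : ∀ z ∈ K, 0 ≤ w z) (P : Polynomial ℂ) :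
    BddAbove ((fun z => w z * ‖P.eval z‖) '' K) := by
  obtain ⟨Cw, hCw⟩ := hwb
  obtain ⟨M, hM⟩ := hK.exists_bound_of_continuousOn (P.continuous.continuousOn (s := K))
  refine ⟨(max Cw 0) * (max M 0), ?_⟩
  rintro y ⟨z, hz, rfl⟩
  have h1 : w z ≤ max Cw 0 := le_trans (hCw ⟨z, hz, rfl⟩) (le_max_left _ _)
  have h2 : ‖P.eval z‖ ≤ max M 0 := by
    have := hM z hz
    exact le_trans this (le_max_left _ _)
  exact mul_le_mul h1 h2 (norm_nonneg _) (le_max_right _ _)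


/-- The weighted sup norm `‖P‖_{E,v} = sup_{z ∈ E} v(z) |P(z)|`. -/
noncomputable def wnorm (E : Set ℂ) (v : ℂ → ℝ) (P : Polynomial ℂ) : ℝ :=
  sSup ((fun z => v z * ‖P.eval z‖) '' E)

/-- For `K ⊆ ℝ`, the weighted Chebyshev polynomial has real coefficients. -/
theorem stmt8 (K : Set ℂ) (hK : IsCompact K) (hKreal : ∀ z ∈ K, z.im = 0)
    (n : ℕ) (w : ℂ → ℝ)
    (hw0 : ∀ z ∈ K, 0 ≤ w z) (hwb : BddAbove (w '' K))
    (husc : UpperSemicontinuousOn w K)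
    (hsupp : ∃ S : Finset ℂ, ↑S ⊆ K ∧ n + 1 ≤ S.card ∧ ∀ z ∈ S, w z ≠ 0)
    (T : Polynomial ℂ) (hmonic : T.Monic) (hdeg : T.natDegree = n)
    (hmin : ∀ P : Polynomial ℂ, P.Monic → P.natDegree = n → wnorm K w T ≤ wnorm K w P) :
    ∀ k : ℕ, (T.coeff k).im = 0 := by
  classical
  set Tb : Polynomial ℂ := T.map (starRingEnd ℂ) with hTbdef
  suffices hTT : T = Tb by
    intro k
    have h1 : T.coeff k = (starRingEnd ℂ) (T.coeff k) := by
      conv_lhs => rw [hTT]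
      simp [hTbdef, Polynomial.coeff_map]
    exact Complex.conj_eq_iff_im.1 h1.symm
  obtain ⟨S, hSK, hScard, hSw⟩ := hsupp
  have hTbeval : ∀ x ∈ K, Tb.eval x = (starRingEnd ℂ) (T.eval x) := by
    intro x hx
    have hxr : (starRingEnd ℂ) x = x := Complex.conj_eq_iff_im.2 (hKreal x hx)
    conv_lhs => rw [hTbdef, Polynomial.eval_map, ← hxr, Polynomial.eval₂_at_apply]
  have hTbdeg : Tb.natDegree = n := by rw [hTbdef, hmonic.natDegree_map, hdeg]
  have hTn : T.coeff n = 1 := by rw [← hdeg]; exact hmonic.coeff_natDegree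
  set Q : Polynomial ℂ := Polynomial.C (2⁻¹ : ℂ) * (T + Tb) with hQdef
  have hQn : Q.coeff n = 1 := by
    simp only [hQdef, Polynomial.coeff_C_mul, Polynomial.coeff_add, hTbdef,
      Polynomial.coeff_map, hTn, map_one]
    norm_num
  have hQdegle : Q.natDegree ≤ n := by
    refine le_trans (natDegree_C_mul_le _ _) (le_trans (natDegree_add_le _ _) ?_)
    simp [hdeg, hTbdeg]
  have hQmonic : Q.Monic := monic_of_natDegree_le_of_coeff_eq_one n hQdegle hQn
  have hQdeg : Q.natDegree = n :=
    le_antisymm hQdegle (le_natDegree_of_ne_zero (by rw [hQn]; exact one_ne_zero))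
  have hQeval : ∀ x ∈ K, Q.eval x = ((T.eval x).re : ℂ) := by
    intro x hx
    rw [hQdef]
    simp only [Polynomial.eval_mul, Polynomial.eval_C, Polynomial.eval_add, hTbeval x hx]
    rw [Complex.add_conj]
    push_cast
    ring
  rw [← sub_eq_zero]
  by_contra hD
  set D : Polynomial ℂ := T - Tb with hDdef
  have hDn : D.coeff n = 0 := by
    simp [hDdef, Polynomial.coeff_sub, hTbdef, Polynomial.coeff_map, hTn]
  have hDdeg : D.natDegree < n := by
    have hDle : D.natDegree ≤ n := by
      refine le_trans (natDegree_sub_le _ _) ?_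
      simp [hdeg, hTbdeg]
    rcases lt_or_eq_of_le hDle with h | h
    · exact h
    · exfalso
      apply hD
      have : D.leadingCoeff = 0 := by rw [Polynomial.leadingCoeff, h, hDn]
      exact Polynomial.leadingCoeff_eq_zero.1 this
  have hn : 0 < n := lt_of_le_of_lt (Nat.zero_le _) hDdeg
  -- basic facts about wnorm
  set m := wnorm K w T with hm
  have hSne : S.Nonempty := Finset.card_pos.1 (by omega)
  have hKne : K.Nonempty := ⟨hSne.choose, hSK hSne.choose_spec⟩
  have hle_m : ∀ x ∈ K, w x * ‖T.eval x‖ ≤ m := fun x hx =>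
    le_csSup (my_bdd hK hwb hw0 T) ⟨x, hx, rfl⟩
  have hm_pos : 0 < m := by
    rcases lt_or_ge 0 m with h | h
    · exact h
    · exfalso
      have hall : ∀ z ∈ S, T.eval z = 0 := by
        intro z hz
        have hzK := hSK hz
        have h0 : 0 ≤ w z * ‖T.eval z‖ :=
          mul_nonneg (hw0 z hzK) (norm_nonneg _)
        have he : w z * ‖T.eval z‖ = 0 :=
          le_antisymm (le_trans (hle_m z hzK) h) h0
        rcases mul_eq_zero.1 he with h' | h'
        · exact absurd h' (hSw z hz)
        · exact norm_eq_zero.1 h'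
      have hsub : S.val ⊆ T.roots := by
        intro z hz
        rw [Polynomial.mem_roots hmonic.ne_zero]
        exact hall z hz
      have := Polynomial.card_le_degree_of_subset_roots hsub
      omega
  have habsQ : ∀ x ∈ K, ‖Q.eval x‖ ≤ ‖T.eval x‖ := by
    intro x hx
    rw [hQeval x hx, Complex.norm_real, Real.norm_eq_abs]
    exact Complex.abs_re_le_norm _
  have hQle : ∀ x ∈ K, w x * ‖Q.eval x‖ ≤ m := fun x hx =>
    le_trans (mul_le_mul_of_nonneg_left (habsQ x hx) (hw0 x hx)) (hle_m x hx)
  have hQnorm : wnorm K w Q = m := by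
    refine le_antisymm (csSup_le (hKne.image _) ?_) (hmin Q hQmonic hQdeg)
    rintro y ⟨x, hx, rfl⟩
    exact hQle x hx
  -- extremal set
  set A : Set ℂ := {x | x ∈ K ∧ w x * ‖Q.eval x‖ = m} with hA
  have hAroot : ∀ x ∈ A, D.IsRoot x := by
    rintro x ⟨hxK, hxm⟩
    have hwx : 0 < w x := by
      rcases (hw0 x hxK).lt_or_eq with h | h
      · exact h
      · exfalso; rw [← h, zero_mul] at hxm; linarith
    have he : w x * ‖T.eval x‖ = m :=
      le_antisymm (hle_m x hxK)
        (hxm ▸ mul_le_mul_of_nonneg_left (habsQ x hxK) (hw0 x hxK))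
    have habs : ‖Q.eval x‖ = ‖T.eval x‖ :=
      mul_left_cancel₀ hwx.ne' (by rw [hxm, he])
    rw [hQeval x hxK, Complex.norm_real, Real.norm_eq_abs] at habs
    have him : (T.eval x).im = 0 := Complex.abs_re_eq_norm.1 habs
    show D.eval x = 0
    rw [hDdef, Polynomial.eval_sub, hTbeval x hxK, Complex.sub_conj, him]
    simp
  have hAfin : A.Finite := (Polynomial.finite_setOf_isRoot hD).subset hAroot
  set Afin : Finset ℂ := hAfin.toFinset with hAfindef
  have hAcard : Afin.card < n := by
    refine lt_of_le_of_lt (Polynomial.card_le_degree_of_subset_roots ?_) hDdeg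
    intro z hz
    rw [Polynomial.mem_roots hD]
    exact hAroot z (hAfin.mem_toFinset.1 hz)
  set q : Polynomial ℂ := Lagrange.interpolate Afin id (fun x => Q.eval x) with hqdef
  have hinj : Set.InjOn id (Afin : Set ℂ) := fun a _ b _ h => h
  have hqeval : ∀ x ∈ Afin, q.eval x = Q.eval x := by
    intro x hx
    exact Lagrange.eval_interpolate_at_node _ hinj hx
  have hqdeg : q.degree < (n : WithBot ℕ) :=
    lt_of_lt_of_le (Lagrange.degree_interpolate_lt _ hinj)
      (by exact_mod_cast le_of_lt hAcard)
  -- the functions f and g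
  set f : ℂ → ℝ := fun x => w x * ‖Q.eval x‖ with hfdef
  set g : ℂ → ℝ := fun x => w x * ‖(Q - q).eval x‖ with hgdef
  have hf0 : ∀ x ∈ K, 0 ≤ f x := fun x hx => mul_nonneg (hw0 x hx) (norm_nonneg _)
  have hfusc : UpperSemicontinuousOn f K :=
    my_usc_mul husc hw0 (continuous_norm.comp Q.continuous)
      (fun z => norm_nonneg _)
  have hgusc : UpperSemicontinuousOn g K :=
    my_usc_mul husc hw0 (continuous_norm.comp (Q - q).continuous)
      (fun z => norm_nonneg _)
  set G := sSup (g '' K) with hGdef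
  have hG : ∀ x ∈ K, g x ≤ G := fun x hx => le_csSup (my_bdd hK hwb hw0 (Q - q)) ⟨x, hx, rfl⟩
  have hG0 : 0 ≤ G := by
    obtain ⟨x0, hx0⟩ := hKne
    exact le_trans (mul_nonneg (hw0 x0 hx0) (norm_nonneg _)) (hG x0 hx0)
  set B : Set ℂ := {x | x ∈ K ∧ m / 2 ≤ g x} with hB
  have hBclosed : IsClosed B := my_usc_closed hgusc hK.isClosed (m / 2)
  have hBcompact : IsCompact B := hK.of_isClosed_subset hBclosed (fun x hx => hx.1)
  have hm'ex : ∃ m', 0 ≤ m' ∧ m' < m ∧ ∀ x ∈ B, f x ≤ m' := by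
    rcases B.eq_empty_or_nonempty with hBe | hBne
    · exact ⟨0, le_refl 0, hm_pos, fun x hx => by rw [hBe] at hx; exact absurd hx (by simp)⟩
    · obtain ⟨x₀, hx₀B, hx₀max⟩ :=
        my_usc_max (hfusc.mono (fun x hx => hx.1)) hBcompact hBne
          ((my_bdd hK hwb hw0 Q).mono (Set.image_mono (fun x hx => hx.1)))
      have hx₀K := hx₀B.1
      refine ⟨f x₀, hf0 x₀ hx₀K, ?_, hx₀max⟩
      rcases lt_or_eq_of_le (hQle x₀ hx₀K) with h | h
      · exact h
      · exfalso
        have hx₀A : x₀ ∈ A := ⟨hx₀K, h⟩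
        have hx₀Afin : x₀ ∈ Afin := hAfin.mem_toFinset.2 hx₀A
        have hev : (Q - q).eval x₀ = 0 := by
          rw [Polynomial.eval_sub, hqeval x₀ hx₀Afin, sub_self]
        have hg0 : g x₀ = 0 := by rw [hgdef]; simp [hev]
        have := hx₀B.2
        rw [hg0] at this
        linarith
  obtain ⟨m', hm'0, hm'lt, hm'B⟩ := hm'ex
  set t : ℝ := min 2⁻¹ ((m - m') / (2 * (G + 1))) with htdef
  have ht0 : 0 < t := lt_min (by norm_num) (div_pos (by linarith) (by positivity))
  have ht2 : t ≤ 2⁻¹ := min_le_left _ _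
  have htG : t * G ≤ (m - m') / 2 := by
    have h1 : t ≤ (m - m') / (2 * (G + 1)) := min_le_right _ _
    have h2 : t * G ≤ (m - m') / (2 * (G + 1)) * G := mul_le_mul_of_nonneg_right h1 hG0
    refine le_trans h2 ?_
    rw [div_mul_eq_mul_div, div_le_div_iff₀ (by positivity) (by norm_num)]
    nlinarith [hG0, sub_pos.2 hm'lt]
  -- the competitor polynomial
  set P' : Polynomial ℂ := Q - Polynomial.C (t : ℂ) * q with hP'def
  have hCtq : (Polynomial.C (t : ℂ) * q).degree < Q.degree := by
    have ht0' : (t : ℂ) ≠ 0 := by exact_mod_cast ht0.ne'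
    rw [Polynomial.degree_C_mul ht0', Polynomial.degree_eq_natDegree hQmonic.ne_zero, hQdeg]
    exact hqdeg
  have hP'monic : P'.Monic := hQmonic.sub_of_left hCtq
  have hP'deg : P'.natDegree = n := by
    have h1 : P'.degree = Q.degree := Polynomial.degree_sub_eq_left_of_degree_lt hCtq
    rw [← hQdeg]
    exact Polynomial.natDegree_eq_of_degree_eq h1
  have hkey : ∀ x ∈ K, w x * ‖P'.eval x‖ ≤ (1 - t) * f x + t * g x := by
    intro x hx
    have heval : P'.eval x =
        ((1 - t : ℝ) : ℂ) * Q.eval x + ((t : ℝ) : ℂ) * ((Q - q).eval x) := by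
      simp only [hP'def, Polynomial.eval_sub, Polynomial.eval_mul, Polynomial.eval_C]
      push_cast
      ring
    rw [heval]
    have habs : ‖((1 - t : ℝ) : ℂ) * Q.eval x + ((t : ℝ) : ℂ) * ((Q - q).eval x)‖
        ≤ (1 - t) * ‖Q.eval x‖ + t * ‖(Q - q).eval x‖ := by
      refine le_trans (norm_add_le _ _) ?_
      rw [norm_mul, norm_mul, Complex.norm_real, Complex.norm_real, Real.norm_eq_abs, Real.norm_eq_abs,
        abs_of_nonneg (by linarith : (0:ℝ) ≤ 1 - t), abs_of_nonneg ht0.le]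
    calc w x * ‖_‖ ≤ w x * ((1 - t) * ‖Q.eval x‖
          + t * ‖(Q - q).eval x‖) := mul_le_mul_of_nonneg_left habs (hw0 x hx)
      _ = (1 - t) * f x + t * g x := by rw [hfdef, hgdef]; ring
  set μ : ℝ := max (m - t * (m / 2)) ((m + m') / 2) with hμdef
  have hbound : ∀ x ∈ K, w x * ‖P'.eval x‖ ≤ μ := by
    intro x hx
    refine le_trans (hkey x hx) ?_
    by_cases hxB : x ∈ B
    · refine le_trans ?_ (le_max_right _ _)
      have h1 : f x ≤ m' := hm'B x hxB
      have h2 : g x ≤ G := hG x hx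
      have e1 : (1 - t) * f x ≤ m' := by nlinarith [hf0 x hx, ht0]
      have e2 : t * g x ≤ (m - m') / 2 := le_trans (mul_le_mul_of_nonneg_left h2 ht0.le) htG
      linarith
    · refine le_trans ?_ (le_max_left _ _)
      have hgx : g x < m / 2 := by
        by_contra hc
        push_neg at hc
        exact hxB ⟨hx, hc⟩
      have e1 : (1 - t) * f x ≤ (1 - t) * m :=
        mul_le_mul_of_nonneg_left (hQle x hx) (by linarith)
      have e2 : t * g x ≤ t * (m / 2) := mul_le_mul_of_nonneg_left hgx.le ht0.le
      nlinarith
  have hμm : μ < m := by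
    refine max_lt ?_ ?_
    · nlinarith
    · linarith
  have hfinal : wnorm K w P' ≤ μ := by
    refine csSup_le (hKne.image _) ?_
    rintro y ⟨x, hx, rfl⟩
    exact hbound x hx
  have := hmin P' hP'monic hP'deg
  linarith
end

section
/- (Weighted alternation theorem, necessity) Let K be a compact subset of ℝ, n ∈ ℕ, and w : K → [0,∞) a bounded upper semicontinuous function nonzero at at least n+1 points of K. If P_n is the weighted Chebyshev polynomial of degree n on K with respect to w (which has real coefficients), then there exist points x₀ < x₁ < ⋯ < x_n in K such that w(x_j) P_n(x_j) = (−1)^{n−j} ‖P_n‖_{K,w} for j = 0, 1, …, n. -/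
open Polynomial Metric Set

open Filter Topology


lemma usc_seq_le {K : Set ℂ} {f : ℂ → ℝ} {x : ℂ} (hx : x ∈ K)
    (hf : UpperSemicontinuousOn f K) {u : ℕ → ℂ} (hu : ∀ k, u k ∈ K)
    (hconv : Filter.Tendsto u Filter.atTop (nhds x)) {c : ℝ}
    (hc : ∀ᶠ k in Filter.atTop, c ≤ f (u k)) : c ≤ f x := by
  by_contra h
  push_neg at h
  have h2 := hf x hx c h
  have hin : Filter.Tendsto u Filter.atTop (nhdsWithin x K) :=
    tendsto_nhdsWithin_of_tendsto_nhds_of_eventually_within _ hconv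
      (Filter.Eventually.of_forall hu)
  obtain ⟨k, h1, h3⟩ := (hc.and (hin.eventually h2)).exists
  linarith

lemma usc_exists_max {K : Set ℂ} (hK : IsCompact K) (hne : K.Nonempty) {f : ℂ → ℝ}
    (hf : UpperSemicontinuousOn f K) : ∃ x ∈ K, ∀ y ∈ K, f y ≤ f x := by
  have hb : BddAbove (f '' K) := by
    by_contra hb
    have h1 : ∀ k : ℕ, ∃ x ∈ K, (k : ℝ) < f x := by
      intro k
      by_contra hk
      push_neg at hk
      exact hb ⟨k, fun r hr => by obtain ⟨x, hx, rfl⟩ := hr; exact hk x hx⟩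
    choose u hu hfu using h1
    obtain ⟨x, hxK, φ, hφ, hconv⟩ := hK.tendsto_subseq hu
    have : f x + 1 ≤ f x := by
      refine usc_seq_le hxK hf (fun k => hu _) hconv ?_
      have h2 : ∀ᶠ k : ℕ in Filter.atTop, f x + 1 ≤ (k : ℝ) := by
        filter_upwards [Filter.eventually_ge_atTop ⌈f x + 1⌉₊] with k hk
        calc f x + 1 ≤ (⌈f x + 1⌉₊ : ℝ) := Nat.le_ceil _
          _ ≤ (k : ℝ) := by exact_mod_cast hk
      filter_upwards [h2] with k hk
      calc f x + 1 ≤ (k : ℝ) := hk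
        _ ≤ (φ k : ℝ) := by exact_mod_cast hφ.le_apply
        _ ≤ f (u (φ k)) := (hfu (φ k)).le
    linarith
  set m := sSup (f '' K) with hm
  have h1 : ∀ k : ℕ, ∃ x ∈ K, m - 1 / (k + 1) < f x := by
    intro k
    have : m - 1 / (k + 1) < m := by
      have : (0:ℝ) < 1 / (k + 1) := by positivity
      linarith
    obtain ⟨y, hy, hy2⟩ := exists_lt_of_lt_csSup (hne.image f) this
    obtain ⟨x, hx, rfl⟩ := hy
    exact ⟨x, hx, hy2⟩
  choose u hu hfu using h1
  obtain ⟨x, hxK, φ, hφ, hconv⟩ := hK.tendsto_subseq hu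
  refine ⟨x, hxK, fun y hy => ?_⟩
  have hym : f y ≤ m := le_csSup hb ⟨y, hy, rfl⟩
  suffices hsuf : m ≤ f x by linarith
  by_contra hlt
  push_neg at hlt
  have hc : (f x + m) / 2 ≤ f x := by
    refine usc_seq_le hxK hf (fun k => hu _) hconv ?_
    have htend : Filter.Tendsto (fun k : ℕ => m - 1 / ((φ k : ℝ) + 1)) Filter.atTop (nhds m) := by
      have h0 : Filter.Tendsto (fun k : ℕ => 1 / ((k : ℝ) + 1)) Filter.atTop (nhds 0) :=
        tendsto_one_div_add_atTop_nhds_zero_nat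
      have := (h0.comp (hφ.tendsto_atTop)).const_sub m
      simpa using this
    have := htend.eventually (eventually_gt_nhds (by linarith : (f x + m) / 2 < m))
    filter_upwards [this] with k hk
    exact le_trans hk.le (hfu (φ k)).le
  linarith

lemma usc_isCompact_setOf {K : Set ℂ} (hK : IsCompact K) {f : ℂ → ℝ}
    (hf : UpperSemicontinuousOn f K) (m : ℝ) : IsCompact {x | x ∈ K ∧ m ≤ f x} := by
  refine hK.of_isClosed_subset ?_ (fun x hx => hx.1)
  refine IsSeqClosed.isClosed ?_
  intro u x hu hconv
  have hxK : x ∈ K := hK.isClosed.mem_of_tendsto hconv (Filter.Eventually.of_forall fun k => (hu k).1)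
  exact ⟨hxK, usc_seq_le hxK hf (fun k => (hu k).1) hconv (Filter.Eventually.of_forall fun k => (hu k).2)⟩

lemma usc_mul {K : Set ℂ} {w g : ℂ → ℝ} (husc : UpperSemicontinuousOn w K)
    (hw0 : ∀ z ∈ K, 0 ≤ w z) (hg : Continuous g) (hg0 : ∀ z, 0 ≤ g z) :
    UpperSemicontinuousOn (fun z => w z * g z) K := by
  intro x hx y hy
  have htend : Filter.Tendsto (fun δ : ℝ => (w x + δ) * (g x + δ)) (nhds 0) (nhds (w x * g x)) := by
    have : Continuous (fun δ : ℝ => (w x + δ) * (g x + δ)) := by continuity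
    simpa using this.tendsto 0
  have hev := htend.eventually (eventually_lt_nhds hy)
  rw [Metric.eventually_nhds_iff] at hev
  obtain ⟨δ₀, hδ₀, hδprop⟩ := hev
  set δ := δ₀ / 2 with hδdef
  have hδpos : 0 < δ := by positivity
  have hkey : (w x + δ) * (g x + δ) < y := by
    refine hδprop ?_
    simp only [Real.dist_eq, sub_zero, hδdef]
    rw [abs_of_pos hδpos]
    linarith
  have hA : ∀ᶠ z in nhdsWithin x K, w z < w x + δ := husc x hx (w x + δ) (by linarith [hw0 x hx])
  have hB : ∀ᶠ z in nhdsWithin x K, g z < g x + δ :=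
    ((hg.tendsto x).eventually (eventually_lt_nhds (by linarith : g x < g x + δ))).filter_mono
      nhdsWithin_le_nhds
  filter_upwards [hA, hB] with z h1 h2
  calc w z * g z ≤ (w x + δ) * g z := mul_le_mul_of_nonneg_right h1.le (hg0 z)
    _ < (w x + δ) * (g x + δ) := by
        have hpos : 0 < w x + δ := by linarith [hw0 x hx]
        exact mul_lt_mul_of_pos_left h2 hpos
    _ < y := hkey

lemma wnorm_bddAbove {K : Set ℂ} (hK : IsCompact K) {w : ℂ → ℝ}
    (hwb : BddAbove (w '' K)) (hw0 : ∀ z ∈ K, 0 ≤ w z) (Q : Polynomial ℂ) :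
    BddAbove ((fun z => w z * ‖Q.eval z‖) '' K) := by
  rcases K.eq_empty_or_nonempty with h | hne
  · simp [h]
  obtain ⟨Cw, hCw⟩ := hwb
  have hcont : ContinuousOn (fun z => ‖Q.eval z‖) K :=
    (continuous_norm.comp (Q.continuous_aeval)).continuousOn
  obtain ⟨CQ, hCQ⟩ := hK.exists_bound_of_continuousOn hcont
  refine ⟨max Cw 0 * max CQ 0, ?_⟩
  rintro r ⟨z, hz, rfl⟩
  have h1 : w z ≤ max Cw 0 := le_trans (hCw ⟨z, hz, rfl⟩) (le_max_left _ _)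
  have h2 : ‖Q.eval z‖ ≤ max CQ 0 := by
    have := hCQ z hz
    rw [Real.norm_eq_abs, abs_of_nonneg (by positivity)] at this
    exact le_trans this (le_max_left _ _)
  exact mul_le_mul h1 h2 (by positivity) (le_max_right _ _)

lemma le_wnorm {K : Set ℂ} (hK : IsCompact K) {w : ℂ → ℝ}
    (hwb : BddAbove (w '' K)) (hw0 : ∀ z ∈ K, 0 ≤ w z) (Q : Polynomial ℂ)
    {z : ℂ} (hz : z ∈ K) : w z * ‖Q.eval z‖ ≤ wnorm K w Q :=
  le_csSup (wnorm_bddAbove hK hwb hw0 Q) ⟨z, hz, rfl⟩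

lemma wnorm_le {K : Set ℂ} (hne : K.Nonempty) {w : ℂ → ℝ} {Q : Polynomial ℂ} {c : ℝ}
    (h : ∀ z ∈ K, w z * ‖Q.eval z‖ ≤ c) : wnorm K w Q ≤ c := by
  refine csSup_le (hne.image _) ?_
  rintro r ⟨z, hz, rfl⟩
  exact h z hz

lemma eval_map_conj (P : Polynomial ℂ) {z : ℂ} (hz : z.im = 0) :
    (P.map (starRingEnd ℂ)).eval z = starRingEnd ℂ (P.eval z) := by
  have hzz : starRingEnd ℂ z = z := Complex.conj_eq_iff_im.mpr hz
  rw [Polynomial.eval_map]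
  conv_lhs => rw [← hzz]
  exact Polynomial.eval₂_at_apply (starRingEnd ℂ) z

lemma prod_sign_aux {i : ℕ} (t : ℕ → ℝ) (x : ℝ) (k : ℕ) (hk : k ≤ i + 1)
    (h1 : ∀ j, j < k → x < t j) (h2 : ∀ j, k ≤ j → j < i + 1 → t j < x) :
    0 < (-1 : ℝ) ^ k * ∏ j ∈ Finset.range (i + 1), (x - t j) := by
  rw [Finset.range_eq_Ico, ← Finset.prod_Ico_consecutive _ (Nat.zero_le k) hk]
  have hpos2 : 0 < ∏ j ∈ Finset.Ico k (i + 1), (x - t j) := by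
    apply Finset.prod_pos
    intro j hj
    rw [Finset.mem_Ico] at hj
    have := h2 j hj.1 hj.2
    linarith
  have heq : ∏ j ∈ Finset.Ico 0 k, (x - t j)
      = (-1 : ℝ) ^ k * ∏ j ∈ Finset.Ico 0 k, (t j - x) := by
    have : ∀ j ∈ Finset.Ico 0 k, (x - t j) = (-1) * (t j - x) := by intros; ring
    rw [Finset.prod_congr rfl this, Finset.prod_mul_distrib, Finset.prod_const]
    congr 1
    rw [Nat.card_Ico, Nat.sub_zero]
  have hpos1 : 0 < ∏ j ∈ Finset.Ico 0 k, (t j - x) := by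
    apply Finset.prod_pos
    intro j hj
    rw [Finset.mem_Ico] at hj
    have := h1 j hj.2
    linarith
  rw [heq]
  have h4 : ((-1 : ℝ) ^ k) * ((-1 : ℝ) ^ k) = 1 := by
    rw [← pow_add]
    exact Even.neg_one_pow (Even.add_self k)
  have := mul_pos hpos1 hpos2
  nlinarith

lemma good_ext {a b : ℂ} (ha : a.im = 0) (hb : b.im = 0) (h : a.re = b.re) : a = b :=
  Complex.ext h (by rw [ha, hb])

set_option maxHeartbeats 800000 in
lemma key_perturb {K : Set ℂ} (hK : IsCompact K) (hne : K.Nonempty)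
    {w : ℂ → ℝ}
    (hw0 : ∀ z ∈ K, 0 ≤ w z) (hwb : BddAbove (w '' K))
    (husc : UpperSemicontinuousOn w K)
    (R q : Polynomial ℂ)
    (hRreal : ∀ z ∈ K, (R.eval z).im = 0) (hqreal : ∀ z ∈ K, (q.eval z).im = 0)
    {m : ℝ} (hm : 0 < m) (hRnorm : wnorm K w R = m)
    (hsign : ∀ z ∈ K, m ≤ w z * ‖R.eval z‖ →
      0 < (q.eval z).re * (R.eval z).re) :
    ∃ ε : ℝ, 0 < ε ∧ wnorm K w (R - Polynomial.C (ε : ℂ) * q) < m := by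
  have hRcont : Continuous fun z => ‖R.eval z‖ :=
    continuous_norm.comp R.continuous_aeval
  have hqcont : Continuous fun z => ‖q.eval z‖ :=
    continuous_norm.comp q.continuous_aeval
  set g := fun z => w z * ‖R.eval z‖ with hg
  have hgusc : UpperSemicontinuousOn g K :=
    usc_mul husc hw0 hRcont (fun z => norm_nonneg _)
  have hgle : ∀ z ∈ K, g z ≤ m := fun z hz => hRnorm ▸ le_wnorm hK hwb hw0 R hz
  set A := {z | z ∈ K ∧ m ≤ g z} with hA
  have hAcomp : IsCompact A := usc_isCompact_setOf hK hgusc m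
  have hAne : A.Nonempty := by
    obtain ⟨x₀, hx₀, hmax⟩ := usc_exists_max hK hne hgusc
    refine ⟨x₀, hx₀, ?_⟩
    rw [← hRnorm]
    exact wnorm_le hne (fun z hz => hmax z hz)
  obtain ⟨a₀, ha₀A, hminA'⟩ := hAcomp.exists_isMinOn hAne hRcont.continuousOn
  have hminA : ∀ z ∈ A, ‖R.eval a₀‖ ≤ ‖R.eval z‖ := fun z hz => hminA' hz
  set c := ‖R.eval a₀‖ with hc
  have hcpos : 0 < c := by
    have h1 : 0 < w a₀ * c := lt_of_lt_of_le hm ha₀A.2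
    nlinarith [norm_nonneg (R.eval a₀), hw0 a₀ ha₀A.1]
  set V := {z : ℂ | 0 < (q.eval z).re * (R.eval z).re ∧ c / 2 < ‖R.eval z‖} with hV
  have hVopen : IsOpen V := by
    refine IsOpen.inter ?_ ?_
    · exact isOpen_lt continuous_const
        ((Complex.continuous_re.comp q.continuous_aeval).mul
          (Complex.continuous_re.comp R.continuous_aeval))
    · exact isOpen_lt continuous_const hRcont
  have hAV : A ⊆ V := by
    intro z hz
    refine ⟨hsign z hz.1 hz.2, lt_of_lt_of_le (by linarith) (hminA z hz)⟩
  obtain ⟨m', hm'lt, hm'⟩ : ∃ m' < m, ∀ z ∈ K \ V, g z ≤ m' := by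
    rcases (K \ V).eq_empty_or_nonempty with h | hne'
    · exact ⟨m / 2, by linarith, by simp [h]⟩
    · have hK' : IsCompact (K \ V) := hK.diff hVopen
      obtain ⟨x', hx', hmax'⟩ := usc_exists_max hK' hne' (hgusc.mono diff_subset)
      refine ⟨g x', ?_, fun z hz => hmax' z hz⟩
      have hnotA : x' ∉ A := fun hA' => hx'.2 (hAV hA')
      refine lt_of_le_of_ne (hgle x' hx'.1) fun h => hnotA ⟨hx'.1, h.ge⟩
  obtain ⟨Cw, hCw⟩ := hwb
  have hCwle : ∀ z ∈ K, w z ≤ Cw := fun z hz => hCw ⟨z, hz, rfl⟩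
  set Cw' := max Cw 1 with hCw'
  have hCw'1 : (1:ℝ) ≤ Cw' := le_max_right _ _
  obtain ⟨Cq, hCq⟩ := hK.exists_bound_of_continuousOn hqcont.continuousOn
  set D := max Cq 1 with hD
  have hD1 : (1:ℝ) ≤ D := le_max_right _ _
  have hqD : ∀ z ∈ K, ‖q.eval z‖ ≤ D := by
    intro z hz
    have := hCq z hz
    rw [Real.norm_eq_abs, abs_of_nonneg (norm_nonneg _)] at this
    exact le_trans this (le_max_left _ _)
  set ε := min ((c / 2) / D) ((m - m') / (2 * Cw' * D)) with hε
  have hεpos : 0 < ε := by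
    apply lt_min
    · positivity
    · have : 0 < m - m' := by linarith
      positivity
  refine ⟨ε, hεpos, ?_⟩
  set Q := R - Polynomial.C (ε : ℂ) * q with hQ
  have hQeval : ∀ z, Q.eval z = R.eval z - (ε : ℂ) * q.eval z := by
    intro z; simp [hQ]
  have hfusc : UpperSemicontinuousOn (fun z => w z * ‖Q.eval z‖) K :=
    usc_mul husc hw0 (continuous_norm.comp Q.continuous_aeval)
      (fun z => norm_nonneg _)
  obtain ⟨xs, hxsK, hmaxf⟩ := usc_exists_max hK hne hfusc
  have hwQ : wnorm K w Q ≤ w xs * ‖Q.eval xs‖ :=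
    wnorm_le hne (fun z hz => hmaxf z hz)
  refine lt_of_le_of_lt hwQ ?_
  by_cases hxV : xs ∈ V
  · by_cases hw0' : w xs = 0
    · rw [hw0', zero_mul]; exact hm
    · have hwpos : 0 < w xs := lt_of_le_of_ne (hw0 _ hxsK) (Ne.symm hw0')
      set r := (R.eval xs).re with hr
      set s := (q.eval xs).re with hs
      have hRx : R.eval xs = (r : ℂ) := Complex.ext rfl (by simpa using hRreal xs hxsK)
      have hqx : q.eval xs = (s : ℂ) := Complex.ext rfl (by simpa using hqreal xs hxsK)
      have hQx : Q.eval xs = ((r - ε * s : ℝ) : ℂ) := by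
        rw [hQeval, hRx, hqx]; push_cast; ring
      have habsQ : ‖Q.eval xs‖ = |r - ε * s| := by
        rw [hQx, Complex.norm_real, Real.norm_eq_abs]
      have habsR : ‖R.eval xs‖ = |r| := by
        rw [hRx, Complex.norm_real, Real.norm_eq_abs]
      have hsr : 0 < s * r := hxV.1
      have hrabs : c / 2 < |r| := by rw [← habsR]; exact hxV.2
      have hsD : |s| ≤ D := by
        have := hqD xs hxsK
        rwa [hqx, Complex.norm_real, Real.norm_eq_abs] at this
      have hεs : ε * |s| ≤ c / 2 := by
        calc ε * |s| ≤ ((c / 2) / D) * D := by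
              apply mul_le_mul (min_le_left _ _) hsD (abs_nonneg _)
              positivity
          _ = c / 2 := by field_simp
      have hkey : |r - ε * s| < |r| := by
        rcases lt_trichotomy r 0 with hr0 | hr0 | hr0
        · have hs0 : s < 0 := by nlinarith
          have h1 : ε * |s| = -(ε * s) := by rw [abs_of_neg hs0]; ring
          rw [abs_of_neg hr0]
          rw [abs_of_neg (by nlinarith [abs_of_neg hr0] : r - ε * s < 0)]
          nlinarith
        · exfalso; rw [hr0] at hsr; simp at hsr
        · have hs0 : 0 < s := by nlinarith
          have h1 : ε * |s| = ε * s := by rw [abs_of_pos hs0]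
          rw [abs_of_pos hr0] at hrabs ⊢
          rw [abs_of_pos (by nlinarith : 0 < r - ε * s)]
          nlinarith
      calc w xs * ‖Q.eval xs‖ < w xs * ‖R.eval xs‖ := by
            rw [habsQ, habsR]; exact mul_lt_mul_of_pos_left hkey hwpos
        _ ≤ m := hgle xs hxsK
  · have hgm' : g xs ≤ m' := hm' xs ⟨hxsK, hxV⟩
    have habs : ‖Q.eval xs‖ ≤ ‖R.eval xs‖ + ε * ‖q.eval xs‖ := by
      rw [hQeval]
      calc ‖R.eval xs - (ε:ℂ) * q.eval xs‖
          ≤ ‖R.eval xs‖ + ‖(ε:ℂ) * q.eval xs‖ := by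
            exact norm_sub_le (R.eval xs) ((ε:ℂ) * q.eval xs)
        _ = ‖R.eval xs‖ + ε * ‖q.eval xs‖ := by
            rw [norm_mul, Complex.norm_real, Real.norm_eq_abs, abs_of_pos hεpos]
    have hwle : w xs ≤ Cw' := le_trans (hCwle xs hxsK) (le_max_left _ _)
    have hqle : ‖q.eval xs‖ ≤ D := hqD xs hxsK
    have hεb : ε ≤ (m - m') / (2 * Cw' * D) := min_le_right _ _
    have hw0x : 0 ≤ w xs := hw0 xs hxsK
    calc w xs * ‖Q.eval xs‖
        ≤ w xs * ‖R.eval xs‖ + ε * (w xs * ‖q.eval xs‖) := by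
          calc w xs * ‖Q.eval xs‖
              ≤ w xs * (‖R.eval xs‖ + ε * ‖q.eval xs‖) :=
                mul_le_mul_of_nonneg_left habs hw0x
            _ = w xs * ‖R.eval xs‖ + ε * (w xs * ‖q.eval xs‖) := by ring
      _ ≤ m' + ε * (Cw' * D) := by
          have h2 : w xs * ‖q.eval xs‖ ≤ Cw' * D := by
            apply mul_le_mul hwle hqle (norm_nonneg _) (by linarith)
          have h3 : ε * (w xs * ‖q.eval xs‖) ≤ ε * (Cw' * D) :=
            mul_le_mul_of_nonneg_left h2 hεpos.le
          have h4 : w xs * ‖R.eval xs‖ ≤ m' := by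
            simpa only [hg] using hgm'
          linarith
      _ < m := by
          have h5 : ε * (Cw' * D) ≤ (m - m') / 2 := by
            have h6 : (0:ℝ) < Cw' * D := by positivity
            calc ε * (Cw' * D) ≤ ((m - m') / (2 * Cw' * D)) * (Cw' * D) :=
                  mul_le_mul_of_nonneg_right hεb h6.le
              _ = (m - m') / 2 := by field_simp
          linarith

lemma contra_aux {K : Set ℂ} (hK : IsCompact K) (hne : K.Nonempty)
    {w : ℂ → ℝ} (hw0 : ∀ z ∈ K, 0 ≤ w z) (hwb : BddAbove (w '' K))
    (husc : UpperSemicontinuousOn w K)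
    {n : ℕ} (R : Polynomial ℂ) (hRmonic : R.Monic) (hRdeg : R.natDegree = n)
    {m : ℝ} (hm : 0 < m) (hRnorm : wnorm K w R = m)
    (hmin : ∀ Q : Polynomial ℂ, Q.Monic → Q.natDegree = n → m ≤ wnorm K w Q)
    (hRreal : ∀ z ∈ K, (R.eval z).im = 0)
    (q : Polynomial ℂ) (hqreal : ∀ z ∈ K, (q.eval z).im = 0)
    (hqn : q.natDegree ≤ n) (hqc : q.coeff n = 0 ∨ q.coeff n = -1)
    (hsign : ∀ z ∈ K, m ≤ w z * ‖R.eval z‖ →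
      0 < (q.eval z).re * (R.eval z).re) :
    False := by
  obtain ⟨ε, hεpos, hlt⟩ := key_perturb hK hne hw0 hwb husc R q hRreal hqreal hm hRnorm hsign
  set Q1 := R - Polynomial.C (ε : ℂ) * q with hQ1
  have hRn : R.coeff n = 1 := by
    have := hRmonic.coeff_natDegree
    rwa [hRdeg] at this
  have hc : Q1.coeff n = 1 - (ε : ℂ) * q.coeff n := by
    rw [hQ1, Polynomial.coeff_sub, Polynomial.coeff_C_mul, hRn]
  obtain ⟨L, hL1, hLc⟩ : ∃ L : ℝ, 1 ≤ L ∧ Q1.coeff n = (L : ℂ) := by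
    rcases hqc with h | h
    · exact ⟨1, le_refl _, by rw [hc, h]; push_cast; ring⟩
    · exact ⟨1 + ε, by linarith, by rw [hc, h]; push_cast; ring⟩
  have hLpos : (0 : ℝ) < L := by linarith
  have hLne : (L : ℂ) ≠ 0 := by exact_mod_cast hLpos.ne'
  have hQ1deg : Q1.natDegree = n := by
    have hle : Q1.natDegree ≤ n := by
      refine le_trans (Polynomial.natDegree_sub_le _ _) ?_
      rw [hRdeg]
      exact max_le (le_refl n) (le_trans (Polynomial.natDegree_C_mul_le _ _) hqn)
    have hge : n ≤ Q1.natDegree := Polynomial.le_natDegree_of_ne_zero (by rw [hLc]; exact hLne)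
    omega
  set Q2 := Polynomial.C ((L : ℂ))⁻¹ * Q1 with hQ2
  have hQ2c : ∀ k, Q2.coeff k = ((L : ℂ))⁻¹ * Q1.coeff k := by
    intro k; rw [hQ2, Polynomial.coeff_C_mul]
  have hQ2deg : Q2.natDegree = n := by
    have hle : Q2.natDegree ≤ n := le_trans (Polynomial.natDegree_C_mul_le _ _) hQ1deg.le
    have hge : n ≤ Q2.natDegree := by
      refine Polynomial.le_natDegree_of_ne_zero ?_
      rw [hQ2c, hLc]
      exact mul_ne_zero (inv_ne_zero hLne) hLne
    omega
  have hQ2monic : Q2.Monic := by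
    rw [Polynomial.Monic, Polynomial.leadingCoeff, hQ2deg, hQ2c, hLc]
    exact inv_mul_cancel₀ hLne
  have hmin2 := hmin Q2 hQ2monic hQ2deg
  have hptle : wnorm K w Q2 ≤ wnorm K w Q1 := by
    refine wnorm_le hne fun z hz => ?_
    have hev : Q2.eval z = ((L : ℂ))⁻¹ * Q1.eval z := by
      rw [hQ2, Polynomial.eval_mul, Polynomial.eval_C]
    have habs : ‖Q2.eval z‖ = L⁻¹ * ‖Q1.eval z‖ := by
      rw [hev, norm_mul, norm_inv, Complex.norm_real, Real.norm_eq_abs, abs_of_pos hLpos]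
    have h1 : ‖Q2.eval z‖ ≤ ‖Q1.eval z‖ := by
      rw [habs]
      have : L⁻¹ ≤ 1 := inv_le_one_of_one_le₀ hL1
      nlinarith [norm_nonneg (Q1.eval z)]
    have h2 : w z * ‖Q2.eval z‖ ≤ w z * ‖Q1.eval z‖ :=
      mul_le_mul_of_nonneg_left h1 (hw0 z hz)
    exact le_trans h2 (le_wnorm hK hwb hw0 Q1 hz)
  linarith

def GoodChain (A : Set ℂ) (R : Polynomial ℂ) (i : ℕ) (y : ℕ → ℂ) : Prop :=
  (∀ j ≤ i, y j ∈ A) ∧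
  (∀ j k, j < k → k ≤ i → (y k).re < (y j).re) ∧
  (∀ j ≤ i, 0 < (-1 : ℝ) ^ j * (R.eval (y j)).re) ∧
  (∀ z ∈ A, 0 < (R.eval z).re → z.re ≤ (y 0).re) ∧
  (∀ j, j < i → ∀ z ∈ A, z.re < (y j).re → 0 < (-1 : ℝ) ^ (j + 1) * (R.eval z).re →
    z.re ≤ (y (j + 1)).re)




lemma exists_good_chain
    {A : Set ℂ} (hAcomp : IsCompact A) (hAne : A.Nonempty)
    (hAim : ∀ z ∈ A, z.im = 0)
    (R : Polynomial ℂ) (hRneA : ∀ z ∈ A, (R.eval z).re ≠ 0)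
    (n : ℕ)
    (contra : ∀ q : Polynomial ℂ, (∀ z : ℂ, z.im = 0 → (q.eval z).im = 0) →
      q.natDegree ≤ n → (q.coeff n = 0 ∨ q.coeff n = -1) →
      (∀ z ∈ A, 0 < (q.eval z).re * (R.eval z).re) → False) :
    ∀ i ≤ n, ∃ y : ℕ → ℂ, GoodChain A R i y := by
  have hRcont : Continuous fun z : ℂ => (R.eval z).re :=
    Complex.continuous_re.comp R.continuous_aeval
  intro i
  induction i with
  | zero =>
    intro _
    set Ap := {z | z ∈ A ∧ 0 ≤ (R.eval z).re} with hAp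
    have hApcomp : IsCompact Ap := by
      refine hAcomp.of_isClosed_subset ?_ (fun z hz => hz.1)
      exact hAcomp.isClosed.inter (isClosed_le continuous_const hRcont)
    rcases Ap.eq_empty_or_nonempty with hApe | hApne
    · exfalso
      refine contra (Polynomial.C (-1)) ?_ ?_ ?_ ?_
      · intro z _; simp
      · simp
      · rcases Nat.eq_zero_or_pos n with rfl | hn
        · right; simp
        · left; rw [Polynomial.coeff_C, if_neg hn.ne']
      · intro z hz
        have h1 : (R.eval z).re < 0 := by
          by_contra h
          push_neg at h
          exact (eq_empty_iff_forall_notMem.mp hApe z) ⟨hz, h⟩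
        simp only [Polynomial.eval_C]
        have : ((-1 : ℂ)).re = -1 := by simp
        rw [this]
        nlinarith
    · obtain ⟨y₀, hy₀, hmax⟩ := hApcomp.exists_isMaxOn hApne Complex.continuous_re.continuousOn
      refine ⟨fun _ => y₀, fun j _ => hy₀.1, fun j k hjk hk => by omega, ?_, ?_, by omega⟩
      · intro j hj
        interval_cases j
        simpa using lt_of_le_of_ne hy₀.2 (Ne.symm (hRneA y₀ hy₀.1))
      · intro z hz h0
        exact hmax ⟨hz, h0.le⟩
  | succ i ih =>
    intro hsn
    obtain ⟨y, hy1, hy2, hy3, hy4, hy5⟩ := ih (by omega)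
    set B := {z | z ∈ A ∧ z.re ≤ (y i).re ∧ 0 ≤ (-1 : ℝ) ^ (i + 1) * (R.eval z).re} with hB
    have hBcomp : IsCompact B := by
      refine hAcomp.of_isClosed_subset ?_ (fun z hz => hz.1)
      exact hAcomp.isClosed.inter ((isClosed_le Complex.continuous_re continuous_const).inter
        (isClosed_le continuous_const (continuous_const.mul hRcont)))
    rcases B.eq_empty_or_nonempty with hBe | hBne
    · -- dead end: build the perturbation polynomial and contradict
      exfalso
      have gap : ∀ j : ℕ, ∃ t : ℝ, j ≤ i →
          ((y j).re < t ∧ (∀ k, k < j → t < (y k).re) ∧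
            ∀ z ∈ A, z.re ≤ t → z.re ≤ (y j).re) := by
        intro j
        by_cases hj : j ≤ i
        swap
        · exact ⟨0, fun h => absurd h hj⟩
        have hyjA : y j ∈ A := hy1 j hj
        have hopen : IsOpen {z : ℂ | 0 < (-1 : ℝ) ^ j * (R.eval z).re} :=
          isOpen_lt continuous_const (continuous_const.mul hRcont)
        obtain ⟨δ, hδpos, hball⟩ := Metric.isOpen_iff.mp hopen (y j) (hy3 j hj)
        have hdist : ∀ z ∈ A, (y j).re < z.re → z.re ≤ (y j).re + δ / 2 →
            0 < (-1 : ℝ) ^ j * (R.eval z).re := by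
          intro z hzA h1 h2
          refine hball ?_
          rw [mem_ball, Complex.dist_eq]
          have hsub : z - y j = ((z.re - (y j).re : ℝ) : ℂ) := by
            apply Complex.ext <;> simp [hAim z hzA, hAim (y j) hyjA]
          rw [hsub, Complex.norm_real, Real.norm_eq_abs, abs_of_pos (by linarith)]
          linarith
        rcases Nat.eq_zero_or_pos j with rfl | hjpos
        · refine ⟨(y 0).re + δ / 2, fun _ => ⟨by linarith, by omega, ?_⟩⟩
          intro z hzA hzle
          by_contra hgt
          push_neg at hgt
          have := hdist z hzA hgt hzle
          simp only [pow_zero, one_mul] at this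
          exact absurd (hy4 z hzA this) (not_le.mpr hgt)
        · have hprev : (y j).re < (y (j - 1)).re := hy2 (j - 1) j (by omega) hj
          refine ⟨min ((y j).re + δ / 2) (((y j).re + (y (j - 1)).re) / 2),
            fun _ => ⟨?_, ?_, ?_⟩⟩
          · apply lt_min (by linarith) (by linarith)
          · intro k hk
            have h1 : min ((y j).re + δ / 2) (((y j).re + (y (j - 1)).re) / 2)
                < (y (j - 1)).re := lt_of_le_of_lt (min_le_right _ _) (by linarith)
            rcases eq_or_lt_of_le (by omega : k ≤ j - 1) with rfl | hk2
            · exact h1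
            · exact lt_trans h1 (hy2 k (j - 1) hk2 (by omega))
          · intro z hzA hzle
            by_contra hgt
            push_neg at hgt
            have hsign := hdist z hzA hgt (le_trans hzle (min_le_left _ _))
            have hzlt : z.re < (y (j - 1)).re :=
              lt_of_le_of_lt (le_trans hzle (min_le_right _ _)) (by linarith)
            have := hy5 (j - 1) (by omega) z hzA hzlt
              (by rwa [show j - 1 + 1 = j by omega])
            rw [show j - 1 + 1 = j by omega] at this
            exact absurd (this) (not_le.mpr hgt)
      choose t ht using gap
      have ht1 : ∀ j, j ≤ i → (y j).re < t j := fun j hj => (ht j hj).1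
      have ht2 : ∀ j k, k < j → j ≤ i → t j < (y k).re := fun j k hk hj => (ht j hj).2.1 k hk
      have ht3 : ∀ j, j ≤ i → ∀ z ∈ A, z.re ≤ t j → z.re ≤ (y j).re :=
        fun j hj => (ht j hj).2.2
      have htmono : ∀ j k, j < k → k ≤ i → t k < t j := by
        intro j k hjk hk
        exact lt_trans (ht2 k j hjk hk) (ht1 j (by omega))
      -- the perturbation polynomial
      set q : Polynomial ℂ :=
        -∏ j ∈ Finset.range (i + 1), (Polynomial.X - Polynomial.C ((t j : ℝ) : ℂ)) with hq
      have hprodmonic : (∏ j ∈ Finset.range (i + 1),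
          (Polynomial.X - Polynomial.C ((t j : ℝ) : ℂ))).Monic :=
        Polynomial.monic_prod_of_monic _ _ (fun j _ => Polynomial.monic_X_sub_C _)
      have hproddeg : (∏ j ∈ Finset.range (i + 1),
          (Polynomial.X - Polynomial.C ((t j : ℝ) : ℂ))).natDegree = i + 1 := by
        rw [Polynomial.natDegree_prod_of_monic _ _ (fun j _ => Polynomial.monic_X_sub_C _)]
        simp
      have hqdeg : q.natDegree = i + 1 := by rw [hq, Polynomial.natDegree_neg, hproddeg]
      have hqeval : ∀ z : ℂ, z.im = 0 →
          q.eval z = ((-(∏ j ∈ Finset.range (i + 1), (z.re - t j)) : ℝ) : ℂ) := by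
        intro z hzim
        have hz : z = ((z.re : ℝ) : ℂ) := by
          apply Complex.ext <;> simp [hzim]
        rw [hq, Polynomial.eval_neg, Polynomial.eval_prod, Complex.ofReal_neg,
          Complex.ofReal_prod]
        congr 1
        refine Finset.prod_congr rfl fun j _ => ?_
        rw [Polynomial.eval_sub, Polynomial.eval_X, Polynomial.eval_C, Complex.ofReal_sub]
        congr 1
      refine contra q (fun z hzim => by rw [hqeval z hzim]; exact Complex.ofReal_im _) (by omega) ?_ ?_
      · rcases eq_or_lt_of_le (hsn : i + 1 ≤ n) with heq | hlt
        · right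
          have h1 := hprodmonic.coeff_natDegree
          rw [hproddeg] at h1
          rw [hq, Polynomial.coeff_neg, ← heq, h1]
        · left
          have hlt' : (∏ j ∈ Finset.range (i + 1),
              (Polynomial.X - Polynomial.C ((t j : ℝ) : ℂ))).natDegree < n := by
            rw [hproddeg]; omega
          rw [hq, Polynomial.coeff_neg, Polynomial.coeff_eq_zero_of_natDegree_lt hlt', neg_zero]
      · -- the sign condition
        intro z hzA
        set x := z.re with hx
        set k := (Finset.filter (fun j => x < t j) (Finset.range (i + 1))).card with hk
        have hkle : k ≤ i + 1 := by
          rw [hk]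
          exact le_trans (Finset.card_filter_le _ _) (by rw [Finset.card_range])
        have hb : ∀ j, k ≤ j → j ≤ i → t j < x := by
          intro j hkj hj
          rcases lt_trichotomy (t j) x with h | h | h
          · exact h
          · exfalso
            have h3' : t j = z.re := by rw [h, hx]
            have h1' := ht3 j hj z hzA (le_of_eq h3'.symm)
            have h2' := ht1 j hj
            linarith [h3'.le, h3'.ge]
          · exfalso
            have hsub : Finset.range (j + 1) ⊆
                Finset.filter (fun j' => x < t j') (Finset.range (i + 1)) := by
              intro j' hj'
              rw [Finset.mem_range] at hj'
              rw [Finset.mem_filter, Finset.mem_range]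
              refine ⟨by omega, ?_⟩
              rcases eq_or_lt_of_le (by omega : j' ≤ j) with rfl | hj'2
              · exact h
              · exact lt_trans h (htmono j' j hj'2 hj)
            have := Finset.card_le_card hsub
            rw [Finset.card_range] at this
            omega
        have ha : ∀ j, j < k → x < t j := by
          intro j hj
          by_contra hcon
          push_neg at hcon
          have hji : j ≤ i := by omega
          have hsub : Finset.filter (fun j' => x < t j') (Finset.range (i + 1)) ⊆
              Finset.range j := by
            intro j' hj'
            rw [Finset.mem_filter, Finset.mem_range] at hj'
            rw [Finset.mem_range]
            by_contra hge
            push_neg at hge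
            rcases eq_or_lt_of_le hge with rfl | hgt
            · linarith [hj'.2]
            · have := htmono j j' hgt (by omega)
              linarith [hj'.2]
          have := Finset.card_le_card hsub
          rw [Finset.card_range] at this
          omega
        have hsR : 0 < (-1 : ℝ) ^ (k + 1) * (R.eval z).re := by
          rcases Nat.eq_zero_or_pos k with hk0 | hkpos
          · have h0 : t 0 < x := hb 0 (by omega) (Nat.zero_le i)
            have h1 : (y 0).re < x := lt_trans (ht1 0 (Nat.zero_le i)) h0
            have h1' : (y 0).re < z.re := by rwa [hx] at h1
            have h2 : ¬(0 < (R.eval z).re) := fun h => absurd (hy4 z hzA h) (not_le.mpr h1')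
            push_neg at h2
            have h3 : (R.eval z).re < 0 := lt_of_le_of_ne h2 (hRneA z hzA)
            rw [hk0]
            norm_num
            linarith
          · have hk1 : k - 1 ≤ i := by omega
            have hxt : x < t (k - 1) := ha (k - 1) (by omega)
            have hxy : x ≤ (y (k - 1)).re := ht3 (k - 1) hk1 z hzA hxt.le
            rcases eq_or_lt_of_le hxy with heq | hlt2
            · have hzeq : z = y (k - 1) :=
                good_ext (hAim z hzA) (hAim _ (hy1 _ hk1)) heq
              have := hy3 (k - 1) hk1
              rw [← hzeq] at this
              have hpow : (-1 : ℝ) ^ (k + 1) = (-1 : ℝ) ^ (k - 1) := by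
                rw [show k + 1 = (k - 1) + 2 by omega, pow_add]
                norm_num
              rw [hpow]
              exact this
            · rcases eq_or_lt_of_le hkle with hki | hki
              · -- k = i + 1
                have hzi : z.re < (y i).re := by
                  have : k - 1 = i := by omega
                  rwa [this] at hlt2
                have hnB : z ∉ B := by rw [hBe]; exact notMem_empty z
                rw [hB] at hnB
                simp only [mem_setOf_eq, not_and, not_le] at hnB
                have := hnB hzA hzi.le
                have hpow : (-1 : ℝ) ^ (k + 1) = -((-1 : ℝ) ^ (i + 1)) := by
                  rw [show k + 1 = (i + 1) + 1 by omega, pow_succ]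
                  ring
                rw [hpow]
                nlinarith
              · -- k ≤ i
                have hki' : k ≤ i := by omega
                have htk : t k < x := hb k le_rfl hki'
                have hyk : (y k).re < x := lt_trans (ht1 k hki') htk
                have h5 := hy5 (k - 1) (by omega) z hzA (by rwa [hx] at hlt2)
                rw [show k - 1 + 1 = k by omega] at h5
                have h6 : ¬(0 < (-1 : ℝ) ^ k * (R.eval z).re) := by
                  intro h
                  exact absurd (h5 h) (not_le.mpr hyk)
                push_neg at h6
                have h7 : (-1 : ℝ) ^ k * (R.eval z).re ≠ 0 := by
                  intro h
                  rcases mul_eq_zero.mp h with h | h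
                  · exact absurd h (pow_ne_zero _ (by norm_num))
                  · exact hRneA z hzA h
                have h8 : (-1 : ℝ) ^ k * (R.eval z).re < 0 := lt_of_le_of_ne h6 h7
                rw [pow_succ]
                nlinarith
        have hprod : 0 < (-1 : ℝ) ^ k * ∏ j ∈ Finset.range (i + 1), (x - t j) :=
          prod_sign_aux t x k hkle ha (fun j h1 h2 => hb j h1 (by omega))
        have hqre : (q.eval z).re = -(∏ j ∈ Finset.range (i + 1), (x - t j)) := by
          rw [hqeval z (hAim z hzA)]
          exact Complex.ofReal_re _
        rw [hqre]
        set p := ∏ j ∈ Finset.range (i + 1), (x - t j) with hp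
        have h4 : ((-1 : ℝ) ^ k) * ((-1 : ℝ) ^ k) = 1 := by
          rw [← pow_add]
          exact Even.neg_one_pow (Even.add_self k)
        have hmulpos := mul_pos hprod hsR
        have hid : ((-1 : ℝ) ^ k * p) * ((-1 : ℝ) ^ (k + 1) * (R.eval z).re)
            = -p * (R.eval z).re := by
          rw [pow_succ]
          linear_combination (-(p * (R.eval z).re)) * h4
        rw [hid] at hmulpos
        linarith [hmulpos]
    · -- B nonempty: extend the chain
      obtain ⟨b₁, hb₁, hbmax⟩ := hBcomp.exists_isMaxOn hBne Complex.continuous_re.continuousOn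
      have hb₁A : b₁ ∈ A := hb₁.1
      have hb₁sign : 0 < (-1 : ℝ) ^ (i + 1) * (R.eval b₁).re := by
        refine lt_of_le_of_ne hb₁.2.2 ?_
        intro h
        rcases mul_eq_zero.mp h.symm with h | h
        · exact absurd h (pow_ne_zero _ (by norm_num))
        · exact hRneA b₁ hb₁A h
      have hb₁lt : b₁.re < (y i).re := by
        rcases eq_or_lt_of_le hb₁.2.1 with heq | h
        · exfalso
          have hzeq : b₁ = y i := good_ext (hAim _ hb₁A) (hAim _ (hy1 i le_rfl)) heq
          have h3 := hy3 i le_rfl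
          rw [← hzeq] at h3
          have : (-1 : ℝ) ^ (i + 1) * (R.eval b₁).re = -((-1 : ℝ) ^ i * (R.eval b₁).re) := by
            rw [pow_succ]; ring
          rw [this] at hb₁sign
          linarith
        · exact h
      set y' : ℕ → ℂ := fun j => if j ≤ i then y j else b₁ with hy'def
      have hyy : ∀ j, j ≤ i → y' j = y j := fun j hj => by simp [hy'def, hj]
      have hyb : ∀ j, ¬(j ≤ i) → y' j = b₁ := fun j hj => by simp [hy'def, hj]
      refine ⟨y', ?_, ?_, ?_, ?_, ?_⟩
      · intro j hj
        by_cases h : j ≤ i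
        · rw [hyy j h]; exact hy1 j h
        · rw [hyb j h]; exact hb₁A
      · intro j k hjk hk
        by_cases h : k ≤ i
        · rw [hyy k h, hyy j (by omega)]
          exact hy2 j k hjk h
        · have hji : j ≤ i := by omega
          rw [hyb k h, hyy j hji]
          rcases eq_or_lt_of_le hji with rfl | hlt
          · exact hb₁lt
          · exact lt_trans hb₁lt (hy2 j i hlt le_rfl)
      · intro j hj
        by_cases h : j ≤ i
        · rw [hyy j h]; exact hy3 j h
        · have hji : j = i + 1 := by omega
          rw [hyb j h, hji]
          exact hb₁sign
      · intro z hz h0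
        rw [hyy 0 (Nat.zero_le i)]
        exact hy4 z hz h0
      · intro j hj z hzA hzlt h0
        by_cases h : j < i
        · rw [hyy (j + 1) (by omega)]
          rw [hyy j (by omega)] at hzlt
          exact hy5 j h z hzA hzlt h0
        · have hji : j = i := by omega
          rw [hyb (j + 1) (by omega : ¬(j + 1 ≤ i))]
          rw [hji] at hzlt
          rw [hyy i le_rfl] at hzlt
          refine hbmax ⟨hzA, hzlt.le, ?_⟩
          rw [hji] at h0
          exact h0.le




/-- Weighted alternation theorem (necessity). -/
theorem stmt10 (K : Set ℂ) (hK : IsCompact K) (hKreal : ∀ z ∈ K, z.im = 0)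
    (n : ℕ) (w : ℂ → ℝ)
    (hw0 : ∀ z ∈ K, 0 ≤ w z) (hwb : BddAbove (w '' K))
    (husc : UpperSemicontinuousOn w K)
    (hsupp : ∃ S : Finset ℂ, ↑S ⊆ K ∧ n + 1 ≤ S.card ∧ ∀ z ∈ S, w z ≠ 0)
    (P : Polynomial ℂ) (hmonic : P.Monic) (hdeg : P.natDegree = n)
    (hmin : ∀ Q : Polynomial ℂ, Q.Monic → Q.natDegree = n → wnorm K w P ≤ wnorm K w Q) :
    ∃ x : Fin (n + 1) → ℝ, StrictMono x ∧ (∀ j, (x j : ℂ) ∈ K) ∧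
      ∀ j : Fin (n + 1),
        (w (x j) : ℂ) * P.eval ((x j : ℂ)) = (-1 : ℂ) ^ (n - (j : ℕ)) * (wnorm K w P : ℂ) := by
  obtain ⟨S, hSsub, hScard, hSw⟩ := hsupp
  have hKne : K.Nonempty := by
    have : S.Nonempty := Finset.card_pos.mp (by omega)
    obtain ⟨z, hz⟩ := this
    exact ⟨z, hSsub hz⟩
  set m := wnorm K w P with hmdef
  -- the real polynomial R
  set Pc := P.map (starRingEnd ℂ) with hPc
  set R := Polynomial.C (2⁻¹ : ℂ) * (P + Pc) with hR
  have hReval : ∀ z : ℂ, z.im = 0 → R.eval z = (((P.eval z).re : ℝ) : ℂ) := by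
    intro z hz
    rw [hR, Polynomial.eval_mul, Polynomial.eval_C, Polynomial.eval_add, hPc,
      eval_map_conj P hz, Complex.add_conj]
    push_cast
    ring
  have hRim : ∀ z ∈ K, (R.eval z).im = 0 := by
    intro z hz
    rw [hReval z (hKreal z hz)]
    exact Complex.ofReal_im _
  have hRabs_le : ∀ z ∈ K, ‖R.eval z‖ ≤ ‖P.eval z‖ := by
    intro z hz
    rw [hReval z (hKreal z hz), Complex.norm_real, Real.norm_eq_abs]
    exact Complex.abs_re_le_norm _
  have hPn : P.coeff n = 1 := by
    have := hmonic.coeff_natDegree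
    rwa [hdeg] at this
  have hPcn : Pc.coeff n = 1 := by
    rw [hPc, Polynomial.coeff_map, hPn, map_one]
  have hPcdeg : Pc.natDegree ≤ n := by
    rw [hPc]
    exact le_trans Polynomial.natDegree_map_le hdeg.le
  have hRcoe : R.coeff n = 1 := by
    rw [hR, Polynomial.coeff_C_mul, Polynomial.coeff_add, hPn, hPcn]
    norm_num
  have hRdegle : R.natDegree ≤ n := by
    refine le_trans (Polynomial.natDegree_C_mul_le _ _) ?_
    exact le_trans (Polynomial.natDegree_add_le _ _) (max_le hdeg.le hPcdeg)
  have hRdeg : R.natDegree = n :=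
    le_antisymm hRdegle (Polynomial.le_natDegree_of_ne_zero (hRcoe ▸ one_ne_zero))
  have hRmonic : R.Monic := by
    rw [Polynomial.Monic, Polynomial.leadingCoeff, hRdeg, hRcoe]
  -- wnorm R = m
  have hwRle : wnorm K w R ≤ m := by
    refine wnorm_le hKne fun z hz => ?_
    exact le_trans (mul_le_mul_of_nonneg_left (hRabs_le z hz) (hw0 z hz))
      (le_wnorm hK hwb hw0 P hz)
  have hwR : wnorm K w R = m := le_antisymm hwRle (hmin R hRmonic hRdeg)
  -- m > 0
  have hm : 0 < m := by
    have hfilter : (S.filter (fun z => P.eval z = 0)).card ≤ n := by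
      refine le_trans (Finset.card_le_card ?_) (le_trans (Multiset.toFinset_card_le _)
        (le_trans (Polynomial.card_roots' P) hdeg.le))
      · intro z hz
        rw [Finset.mem_filter] at hz
        rw [Multiset.mem_toFinset, Polynomial.mem_roots hmonic.ne_zero]
        exact hz.2
    have hex : ∃ z₀ ∈ S, P.eval z₀ ≠ 0 := by
      by_contra h
      push_neg at h
      have : S.filter (fun z => P.eval z = 0) = S := Finset.filter_eq_self.mpr h
      rw [this] at hfilter
      omega
    obtain ⟨z₀, hz₀S, hz₀⟩ := hex
    have hz₀K : z₀ ∈ K := hSsub hz₀S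
    have hwpos : 0 < w z₀ := lt_of_le_of_ne (hw0 z₀ hz₀K) (Ne.symm (hSw z₀ hz₀S))
    have habs : 0 < ‖P.eval z₀‖ := norm_pos_iff.mpr hz₀
    exact lt_of_lt_of_le (mul_pos hwpos habs) (le_wnorm hK hwb hw0 P hz₀K)
  -- the extremal set
  set g := fun z => w z * ‖R.eval z‖ with hgdef
  have hgusc : UpperSemicontinuousOn g K :=
    usc_mul husc hw0 (continuous_norm.comp R.continuous_aeval)
      (fun z => norm_nonneg _)
  set A := {z | z ∈ K ∧ m ≤ g z} with hAdef
  have hAcomp : IsCompact A := usc_isCompact_setOf hK hgusc m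
  have hAK : ∀ z ∈ A, z ∈ K := fun z hz => hz.1
  have hgm : ∀ z ∈ A, g z = m := by
    intro z hz
    refine le_antisymm ?_ hz.2
    rw [← hwR]
    exact le_wnorm hK hwb hw0 R hz.1
  have hAne : A.Nonempty := by
    obtain ⟨x₀, hx₀, hmax⟩ := usc_exists_max hK hKne hgusc
    refine ⟨x₀, hx₀, ?_⟩
    rw [← hwR]
    exact wnorm_le hKne (fun z hz => hmax z hz)
  have hAim : ∀ z ∈ A, z.im = 0 := fun z hz => hKreal z hz.1
  have hwApos : ∀ z ∈ A, 0 < w z := by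
    intro z hz
    have h1 : 0 < g z := by rw [hgm z hz]; exact hm
    rcases (hw0 z hz.1).lt_or_eq with h | h
    · exact h
    · exfalso; rw [hgdef] at h1; simp only [← h, zero_mul] at h1; exact lt_irrefl 0 h1
  have hRabsA : ∀ z ∈ A, 0 < ‖R.eval z‖ := by
    intro z hz
    have h1 : 0 < g z := by rw [hgm z hz]; exact hm
    by_contra h
    push_neg at h
    have : ‖R.eval z‖ = 0 := le_antisymm h (norm_nonneg _)
    rw [hgdef] at h1
    simp only [this, mul_zero] at h1
    exact lt_irrefl 0 h1
  have hRreA : ∀ z ∈ A, (R.eval z).re ≠ 0 := by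
    intro z hz h
    have h2 := hRabsA z hz
    rw [hReval z (hAim z hz), Complex.norm_real, Real.norm_eq_abs] at h2
    rw [hReval z (hAim z hz), Complex.ofReal_re] at h
    rw [h] at h2
    simp at h2
  have hPR : ∀ z ∈ A, P.eval z = R.eval z := by
    intro z hz
    have hzK := hz.1
    have h1 : w z * ‖P.eval z‖ ≤ m := le_trans (le_wnorm hK hwb hw0 P hzK) le_rfl
    have h2 : w z * ‖R.eval z‖ = m := hgm z hz
    have h3 : ‖P.eval z‖ ≤ ‖R.eval z‖ := by
      have := hwApos z hz
      nlinarith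
    have h4 : ‖R.eval z‖ ≤ ‖P.eval z‖ := hRabs_le z hzK
    have h5 : |((P.eval z).re)| = ‖P.eval z‖ := by
      have := le_antisymm h3 h4
      rw [hReval z (hAim z hz), Complex.norm_real, Real.norm_eq_abs] at this
      exact this.symm
    have h6 : (P.eval z).im = 0 := Complex.abs_re_eq_norm.mp h5
    rw [hReval z (hAim z hz)]
    exact Complex.ext (by rw [Complex.ofReal_re]) (by rw [h6, Complex.ofReal_im])
  -- chain
  have contra : ∀ q : Polynomial ℂ, (∀ z : ℂ, z.im = 0 → (q.eval z).im = 0) →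
      q.natDegree ≤ n → (q.coeff n = 0 ∨ q.coeff n = -1) →
      (∀ z ∈ A, 0 < (q.eval z).re * (R.eval z).re) → False := by
    intro q hq1 hq2 hq3 hq4
    exact contra_aux hK hKne hw0 hwb husc R hRmonic hRdeg hm hwR
      (fun Q hQm hQd => hmin Q hQm hQd) hRim q (fun z hz => hq1 z (hKreal z hz)) hq2 hq3
      (fun z hz hle => hq4 z ⟨hz, hle⟩)
  obtain ⟨y, hy1, hy2, hy3, hy4, hy5⟩ := exists_good_chain hAcomp hAne hAim R hRreA n contra n le_rfl
  refine ⟨fun j => (y (n - (j : ℕ))).re, ?_, ?_, ?_⟩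
  · intro j k hjk
    have hj := j.isLt
    have hk := k.isLt
    have hjk' : (j : ℕ) < (k : ℕ) := hjk
    exact hy2 (n - (k : ℕ)) (n - (j : ℕ)) (by omega) (by omega)
  · intro j
    have hyA := hy1 (n - (j : ℕ)) (by omega)
    have hcast : (((y (n - (j : ℕ))).re : ℝ) : ℂ) = y (n - (j : ℕ)) :=
      good_ext (Complex.ofReal_im _) (hAim _ hyA) (by rw [Complex.ofReal_re])
    rw [hcast]
    exact hyA.1
  · intro j
    set e := n - (j : ℕ) with hedef
    have hyA := hy1 e (by omega)
    set z := y e with hzdef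
    have hcast : (((z).re : ℝ) : ℂ) = z :=
      good_ext (Complex.ofReal_im _) (hAim _ hyA) (by rw [Complex.ofReal_re])
    rw [hcast]
    have hPz : P.eval z = (((P.eval z).re : ℝ) : ℂ) := by
      rw [hPR z hyA, hReval z (hAim z hyA), Complex.ofReal_re]
    have hrho : (R.eval z).re = (P.eval z).re := by
      rw [hReval z (hAim z hyA), Complex.ofReal_re]
    set rho := (P.eval z).re with hrhodef
    have hsign : 0 < (-1 : ℝ) ^ e * rho := by
      have := hy3 e (by omega)
      rwa [hrho] at this
    have habs : w z * |rho| = m := by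
      have h0 := hgm z hyA
      simp only [hgdef] at h0
      rwa [hReval z (hAim z hyA), Complex.norm_real, Real.norm_eq_abs] at h0
    have he : |rho| = (-1 : ℝ) ^ e * rho := by
      rw [← abs_of_pos hsign, abs_mul, abs_pow, abs_neg, abs_one, one_pow, one_mul]
    have h4 : ((-1 : ℝ) ^ e) * ((-1 : ℝ) ^ e) = 1 := by
      rw [← pow_add]
      exact Even.neg_one_pow (Even.add_self e)
    rw [he] at habs
    have hreal : w z * rho = (-1 : ℝ) ^ e * m := by
      linear_combination ((-1 : ℝ) ^ e) * habs + (-(w z * rho)) * h4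
    rw [hPz]
    rw [show ((w z : ℝ) : ℂ) * (((rho : ℝ)) : ℂ) = (((w z * rho : ℝ)) : ℂ) by push_cast; ring]
    rw [hreal]
    push_cast
    ring
end
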